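/- Let G be a directed acyclic graph on n vertices whose edge set is totally ordered by a topological order. Suppose every directed cut of the form (first k vertices, remaining vertices) in the topological order has at most F crossing edges. Then the total number of edges of G is at most 2n√F (assuming F ≥ 1). -/

import Mathlib

/-- A DAG given by an edge set on `Fin n` oriented along a topological order,
all prefix cuts of size at most `F`, has at most `2n√F` edges. -/
theorem stmt1 (n F : ℕ) (hF : 1 ≤ F)
    (E : Finset (Fin n × Fin n))
    (htopo : ∀ e ∈ E, e.1 < e.2)
    (hcut : ∀ k : ℕ,
      (E.filter (fun e => (e.1 : ℕ) < k ∧ k ≤ (e.2 : ℕ))).card ≤ F) :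
    (E.card : ℝ) ≤ 2 * n * Real.sqrt F := by
  classical
  set s : ℕ := Nat.sqrt (F - 1) + 1 with hs
  have hs1 : 1 ≤ s := Nat.le_add_left 1 _
  have hsq1 : (s - 1) * (s - 1) < F := by
    have h : Nat.sqrt (F - 1) * Nat.sqrt (F - 1) ≤ F - 1 := by
      have := Nat.sqrt_le' (F - 1); rwa [pow_two] at this
    have hs' : s - 1 = Nat.sqrt (F - 1) := by omega
    rw [hs']; omega
  have hsq2 : F ≤ s * s := by
    have h : F - 1 < (Nat.sqrt (F - 1) + 1) * (Nat.sqrt (F - 1) + 1) := by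
      have := Nat.lt_succ_sqrt' (F - 1)
      rw [pow_two] at this
      simpa [Nat.succ_eq_add_one] using this
    rw [hs]; omega
  -- split edges
  set Es := E.filter (fun e => (e.2 : ℕ) - (e.1 : ℕ) < s) with hEs
  set El := E.filter (fun e => ¬ ((e.2 : ℕ) - (e.1 : ℕ) < s)) with hEl
  have hsplit : E.card = Es.card + El.card :=
    (Finset.card_filter_add_card_filter_not _).symm
  -- short edges
  have hshort : Es.card ≤ n * (s - 1) := by
    have := Finset.card_le_card_of_injOn
      (f := fun e : Fin n × Fin n => ((e.1 : ℕ), (e.2 : ℕ) - (e.1 : ℕ) - 1))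
      (s := Es) (t := Finset.range n ×ˢ Finset.range (s - 1))
      (by
        intro e he
        simp only [Finset.mem_coe, hEs, Finset.mem_filter] at he
        have h1 : (e.1 : ℕ) < (e.2 : ℕ) := htopo e he.1
        have h2 := he.2
        have h4 := e.2.isLt
        simp only [Finset.mem_coe, Finset.mem_product, Finset.mem_range]
        omega)
      (by
        intro a ha b hb hab
        simp only [Finset.mem_coe, hEs, Finset.mem_filter] at ha hb
        have h1 : (a.1 : ℕ) < (a.2 : ℕ) := htopo a ha.1
        have h2 : (b.1 : ℕ) < (b.2 : ℕ) := htopo b hb.1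
        simp only [Prod.mk.injEq] at hab
        have hab' : (a.1 : ℕ) = b.1 ∧ (a.2 : ℕ) = b.2 := by omega
        exact Prod.ext (Fin.ext hab'.1) (Fin.ext hab'.2))
    simpa using this
  -- long edges
  have hlong : El.card ≤ (n / s) * F := by
    have hsub : El ⊆ (Finset.Icc 1 (n / s)).biUnion
        (fun j => E.filter (fun e => (e.1 : ℕ) < j * s ∧ j * s ≤ (e.2 : ℕ))) := by
      intro e he
      simp only [hEl, Finset.mem_filter, not_lt] at he
      obtain ⟨heE, hlen⟩ := he
      have h1 : (e.1 : ℕ) < (e.2 : ℕ) := htopo e heE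
      have h4 : (e.2 : ℕ) < n := e.2.isLt
      set j := (e.2 : ℕ) / s with hj
      have hdm : j * s + (e.2 : ℕ) % s = (e.2 : ℕ) := by
        rw [hj]; exact Nat.div_add_mod' _ _
      have hmod : (e.2 : ℕ) % s < s := Nat.mod_lt _ (by omega)
      have hjn : j ≤ n / s := by
        rw [Nat.le_div_iff_mul_le (by omega : 0 < s)]
        omega
      have hj1 : 1 ≤ j := by
        rw [hj, Nat.one_le_div_iff (by omega : 0 < s)]
        omega
      simp only [Finset.mem_biUnion, Finset.mem_Icc, Finset.mem_filter]
      exact ⟨j, ⟨hj1, hjn⟩, heE, by omega, by omega⟩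
    calc El.card ≤ ((Finset.Icc 1 (n / s)).biUnion
        (fun j => E.filter (fun e => (e.1 : ℕ) < j * s ∧ j * s ≤ (e.2 : ℕ)))).card :=
          Finset.card_le_card hsub
      _ ≤ ∑ j ∈ Finset.Icc 1 (n / s),
          (E.filter (fun e => (e.1 : ℕ) < j * s ∧ j * s ≤ (e.2 : ℕ))).card :=
          Finset.card_biUnion_le
      _ ≤ ∑ _j ∈ Finset.Icc 1 (n / s), F := Finset.sum_le_sum (fun j _ => hcut (j * s))
      _ = (n / s) * F := by simp [Nat.card_Icc, mul_comm]
  -- combine in ℕ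
  have hcardnat : E.card ≤ n * (s - 1) + n / s * F := by
    rw [hsplit]; exact Nat.add_le_add hshort hlong
  -- real arithmetic
  have hF0 : (0:ℝ) ≤ (F:ℝ) := by positivity
  have hsR : (0:ℝ) < (s : ℝ) := by exact_mod_cast hs1
  have hsqmul : Real.sqrt F * Real.sqrt F = (F:ℝ) := Real.mul_self_sqrt hF0
  have h1 : ((s - 1 : ℕ) : ℝ) ≤ Real.sqrt F := by
    have h : ((s-1:ℕ):ℝ) * ((s-1:ℕ):ℝ) ≤ (F : ℝ) := by exact_mod_cast hsq1.le
    nlinarith [Real.sqrt_nonneg (F:ℝ), Nat.cast_nonneg (α := ℝ) (s-1)]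
  have h2 : Real.sqrt F ≤ (s : ℝ) := by
    have h : (F : ℝ) ≤ (s : ℝ) * (s : ℝ) := by exact_mod_cast hsq2
    nlinarith [Real.sqrt_nonneg (F:ℝ)]
  have h3 : (F : ℝ) / (s : ℝ) ≤ Real.sqrt F := by
    rw [div_le_iff₀ hsR]
    nlinarith [Real.sqrt_nonneg (F:ℝ)]
  have h4 : ((n / s : ℕ) : ℝ) ≤ (n : ℝ) / (s : ℝ) := Nat.cast_div_le
  calc (E.card : ℝ) ≤ ((n * (s - 1) + n / s * F : ℕ) : ℝ) := by exact_mod_cast hcardnat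
    _ = (n:ℝ) * ((s-1:ℕ):ℝ) + ((n/s:ℕ):ℝ) * F := by push_cast; ring
    _ ≤ (n:ℝ) * Real.sqrt F + ((n:ℝ)/(s:ℝ)) * F := by gcongr
    _ = (n:ℝ) * Real.sqrt F + (n:ℝ) * ((F:ℝ)/(s:ℝ)) := by ring
    _ ≤ (n:ℝ) * Real.sqrt F + (n:ℝ) * Real.sqrt F := by gcongr
    _ = 2 * n * Real.sqrt F := by ring
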